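/- Let M₂(a) denote the number of pairs (n,k) of positive integers with 1 ≤ k ≤ n such that the Stirling number of the second kind S(n,k) equals a. For every integer a ≥ 2 and every positive integer b such that S(2b,b) > a, one has M₂(a) ≤ 2b. -/

import Mathlib

/-- Stirling numbers of the second kind, defined by the standard recurrence. -/
def stirling2 : ℕ → ℕ → ℕ
  | 0, 0 => 1
  | 0, _ + 1 => 0
  | _ + 1, 0 => 0
  | n + 1, k + 1 => stirling2 n k + (k + 1) * stirling2 n (k + 1)

/-- `M₂ a` is the number of pairs `(n, k)` with `1 ≤ k ≤ n` and `S(n, k) = a`. -/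
noncomputable def M2 (a : ℕ) : ℕ :=
  Nat.card {p : ℕ × ℕ // 1 ≤ p.2 ∧ p.2 ≤ p.1 ∧ stirling2 p.1 p.2 = a}

lemma s_eq_zero : ∀ n k, n < k → stirling2 n k = 0
  | 0, _+1, _ => rfl
  | n+1, k+1, h => by
    simp [stirling2, s_eq_zero n k (by omega), s_eq_zero n (k+1) (by omega)]

lemma s_diag : ∀ n, stirling2 n n = 1
  | 0 => rfl
  | n+1 => by simp [stirling2, s_diag n, s_eq_zero n (n+1) (by omega)]

lemma s_pos : ∀ n k, 1 ≤ k → k ≤ n → 0 < stirling2 n k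
  | _, 0, hk, _ => by omega
  | 0, _+1, _, h => by omega
  | n+1, k+1, _, h => by
    rcases Nat.lt_or_ge (k+1) (n+1) with h2 | h2
    · have h3 := s_pos n (k+1) (by omega) (by omega)
      have : 0 < (k+1) * stirling2 n (k+1) := Nat.mul_pos (by omega) h3
      simp only [stirling2]; omega
    · have : k+1 = n+1 := by omega
      rw [this, s_diag]; omega

lemma s_zero_right (n : ℕ) : stirling2 (n+1) 0 = 0 := rfl

lemma s_one : ∀ n, 1 ≤ n → stirling2 n 1 = 1
  | 1, _ => rfl
  | n+2, _ => by
    have h1 := s_one (n+1) (by omega)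
    show stirling2 (n+1) 0 + (0+1) * stirling2 (n+1) (0+1) = 1
    rw [s_zero_right]
    simpa using h1

lemma s_le_succ_n (n k : ℕ) (hk : 1 ≤ k) : stirling2 n k ≤ stirling2 (n+1) k := by
  obtain ⟨k', rfl⟩ : ∃ k', k = k' + 1 := ⟨k - 1, by omega⟩
  have : stirling2 n (k'+1) ≤ (k'+1) * stirling2 n (k'+1) :=
    Nat.le_mul_of_pos_left _ (by omega)
  simp only [stirling2]; omega

lemma s_lt_succ_n (n k : ℕ) (hk : 2 ≤ k) (hn : k ≤ n) :
    stirling2 n k < stirling2 (n+1) k := by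
  obtain ⟨k', rfl⟩ : ∃ k', k = k' + 1 := ⟨k - 1, by omega⟩
  have h1 : 0 < stirling2 n k' := s_pos n k' (by omega) (by omega)
  have h2 : stirling2 n (k'+1) ≤ (k'+1) * stirling2 n (k'+1) :=
    Nat.le_mul_of_pos_left _ (by omega)
  simp only [stirling2]; omega

lemma s_diag_lt (k d : ℕ) (hd : 1 ≤ d) :
    stirling2 (k+d) k < stirling2 (k+1+d) (k+1) := by
  have hr : k+1+d = (k+d)+1 := by omega
  have h1 : 0 < stirling2 (k+d) (k+1) := s_pos _ _ (by omega) (by omega)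
  have h2 : stirling2 (k+d) (k+1) ≤ (k+1) * stirling2 (k+d) (k+1) :=
    Nat.le_mul_of_pos_left _ (by omega)
  rw [hr]
  simp only [stirling2]; omega

lemma s_strict_col (k : ℕ) (hk : 2 ≤ k) : StrictMono (fun m => stirling2 (k+m) k) :=
  strictMono_nat_of_lt_succ fun m => by
    have := s_lt_succ_n (k+m) k hk (by omega)
    simpa [Nat.add_assoc] using this

lemma s_mono_col (k : ℕ) (hk : 1 ≤ k) : Monotone (fun m => stirling2 (k+m) k) :=
  monotone_nat_of_le_succ fun m => by
    have := s_le_succ_n (k+m) k hk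
    simpa [Nat.add_assoc] using this

lemma s_strict_diag (d : ℕ) (hd : 1 ≤ d) : StrictMono (fun k => stirling2 (k+d) k) :=
  strictMono_nat_of_lt_succ fun k => s_diag_lt k d hd

/-- If `a ≥ 2` and `b ≥ 1` satisfies `S(2b, b) > a`, then `M₂(a) ≤ 2b`. -/
theorem M2_le_of_central_gt (a b : ℕ) (ha : 2 ≤ a) (hb : 1 ≤ b)
    (h : a < stirling2 (2 * b) b) : M2 a ≤ 2 * b := by
  classical
  -- basic facts about any solution
  have key : ∀ n k : ℕ, 1 ≤ k → k ≤ n → stirling2 n k = a →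
      2 ≤ k ∧ k < n ∧ (b ≤ k → n - k < b) := by
    intro n k hk hkn hs
    have hk2 : 2 ≤ k := by
      by_contra hc
      have hk1 : k = 1 := by omega
      rw [hk1, s_one n (by omega)] at hs; omega
    have hlt : k < n := by
      rcases Nat.lt_or_ge k n with h' | h'
      · exact h'
      · have : k = n := by omega
        rw [this, s_diag] at hs; omega
    refine ⟨hk2, hlt, fun hbk => ?_⟩
    by_contra hc
    have hd : b ≤ n - k := by omega
    have hchain : stirling2 (2*b) b ≤ stirling2 n k := by
      have h1 : stirling2 (b + b) b ≤ stirling2 (b + (n-k)) b :=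
        s_mono_col b hb (by omega)
      have h2 : stirling2 (b + (n-k)) b ≤ stirling2 (k + (n-k)) k :=
        (s_strict_diag (n-k) (by omega)).monotone hbk
      have e1 : 2*b = b + b := by omega
      have e2 : k + (n-k) = n := by omega
      rw [e1]
      calc stirling2 (b+b) b ≤ stirling2 (b+(n-k)) b := h1
        _ ≤ stirling2 (k+(n-k)) k := h2
        _ = stirling2 n k := by rw [e2]
    omega
  -- injection into Fin b ⊕ Fin b
  have hinj : ∃ f : {p : ℕ × ℕ // 1 ≤ p.2 ∧ p.2 ≤ p.1 ∧ stirling2 p.1 p.2 = a} →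
      Fin b ⊕ Fin b, Function.Injective f := by
    refine ⟨fun p => if hq : p.1.2 < b then Sum.inl ⟨p.1.2, hq⟩
      else Sum.inr ⟨p.1.1 - p.1.2, ((key _ _ p.2.1 p.2.2.1 p.2.2.2).2.2 (by omega))⟩, ?_⟩
    rintro ⟨⟨n₁, k₁⟩, h₁⟩ ⟨⟨n₂, k₂⟩, h₂⟩ hf
    obtain ⟨hk₁, hlt₁, _⟩ := key n₁ k₁ h₁.1 h₁.2.1 h₁.2.2
    obtain ⟨hk₂, hlt₂, _⟩ := key n₂ k₂ h₂.1 h₂.2.1 h₂.2.2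
    simp only at hf
    by_cases c₁ : k₁ < b <;> by_cases c₂ : k₂ < b <;>
      simp only [c₁, c₂, dif_pos, dif_neg, not_false_iff, dite_true, dite_false] at hf
    · -- both inl: k₁ = k₂
      have hk : k₁ = k₂ := by simpa using congrArg (fun x => (Sum.elim Fin.val (fun _ => 0)) x) hf
      subst hk
      have hmm : stirling2 (k₁ + (n₁ - k₁)) k₁ = stirling2 (k₁ + (n₂ - k₁)) k₁ := by
        rw [show k₁ + (n₁ - k₁) = n₁ by omega, show k₁ + (n₂ - k₁) = n₂ by omega,
          h₁.2.2, h₂.2.2]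
      have := (s_strict_col k₁ hk₁).injective hmm
      simp only [Subtype.mk.injEq, Prod.mk.injEq]
      exact ⟨by omega, trivial⟩
    · exact absurd hf (by simp)
    · exact absurd hf (by simp)
    · -- both inr: d₁ = d₂
      have hd : n₁ - k₁ = n₂ - k₂ := by
        simpa using congrArg (fun x => (Sum.elim (fun _ => 0) Fin.val) x) hf
      have hmm : stirling2 (k₁ + (n₁ - k₁)) k₁ = stirling2 (k₂ + (n₁ - k₁)) k₂ := by
        rw [show k₁ + (n₁ - k₁) = n₁ by omega, hd, show k₂ + (n₂ - k₂) = n₂ by omega,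
          h₁.2.2, h₂.2.2]
      have := (s_strict_diag (n₁ - k₁) (by omega)).injective hmm
      simp only [Subtype.mk.injEq, Prod.mk.injEq]
      omega
  obtain ⟨f, hf⟩ := hinj
  have := Nat.card_le_card_of_injective f hf
  simpa [M2, Nat.card_sum, two_mul] using this
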